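/- arXiv:math/9311207 — 2 statements merged into one kernel-verified Lean document; each statement's English description precedes it below -/
import Mathlib

section
/- Let κ be regular, λ = (2^{<κ})^+, and μ < κ. For every f : [λ]^2 → μ there exist A ⊆ λ and i < μ such that A is i-homogeneous and either |A| = λ and i = 0, or A has order type κ+1 and i > 0. In short: λ → (λ, (κ+1)_{μ-1})^2. -/
open Cardinal Ordinal

/-- The order type of a set of ordinals (an `Ordinal.{1}` for universe reasons). -/
noncomputable def otype (s : Set Ordinal.{0}) : Ordinal.{1} :=
  Ordinal.type (Subrel ((· < ·) : Ordinal → Ordinal → Prop) (· ∈ s))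

/-- `OT s o` means the set of ordinals `s` has order type `o`. -/
def OT (s : Set Ordinal.{0}) (o : Ordinal.{0}) : Prop := otype s = Ordinal.lift.{1,0} o

/-- `2^{<κ} = sup { 2^μ : μ < κ }`. -/
noncomputable def twoLT (κ : Cardinal.{0}) : Cardinal.{0} := ⨆ μ : Set.Iio κ, 2 ^ (μ : Cardinal)

/-- `X` is `i`-homogeneous for the pair coloring `f`. -/
def Homog {α : Type*} (f : Ordinal → Ordinal → α) (X : Set Ordinal) (i : α) : Prop :=
  ∀ a ∈ X, ∀ b ∈ X, a < b → f a b = i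

private lemma twoLT_bdd (κ : Cardinal.{0}) :
    BddAbove (Set.range fun μ : Set.Iio κ => (2:Cardinal) ^ (μ : Cardinal)) := by
  refine ⟨2 ^ κ, ?_⟩
  rintro x ⟨c, rfl⟩
  exact Cardinal.power_le_power_left two_ne_zero c.2.le

lemma le_twoLT {κ c : Cardinal.{0}} (hc : c < κ) : 2 ^ c ≤ twoLT κ :=
  le_ciSup (twoLT_bdd κ) ⟨c, hc⟩

lemma self_le_twoLT (κ : Cardinal.{0}) : κ ≤ twoLT κ := by
  by_contra h
  push_neg at h
  exact absurd (le_twoLT h) (not_le.2 (Cardinal.cantor _))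

lemma exists_le_of_lt_twoLT {κ a : Cardinal.{0}} (hκ0 : 0 < κ) (h : a < twoLT κ) :
    ∃ c < κ, a ≤ 2 ^ c := by
  haveI : Nonempty (Set.Iio κ) := ⟨⟨0, hκ0⟩⟩
  rw [twoLT, lt_ciSup_iff (twoLT_bdd κ)] at h
  obtain ⟨⟨c, hc⟩, hlt⟩ := h
  exact ⟨c, hc, hlt.le⟩

lemma twoLT_pow_le {κ : Cardinal.{0}} (hκ : κ.IsRegular) {ρ : Cardinal.{0}} (hρ : ρ < κ) :
    twoLT κ ^ ρ ≤ twoLT κ := by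
  have hκ0 : 0 < κ := hκ.pos
  have hκσ : κ ≤ twoLT κ := self_le_twoLT κ
  have hσℵ : ℵ₀ ≤ twoLT κ := hκ.aleph0_le.trans hκσ
  by_cases hA : ∃ c < κ, twoLT κ ≤ 2 ^ c
  · obtain ⟨c, hc, hsc⟩ := hA
    calc twoLT κ ^ ρ ≤ (2 ^ c) ^ ρ := power_le_power_right hsc
      _ = 2 ^ (c * ρ) := by rw [← power_mul]
      _ ≤ twoLT κ := le_twoLT (mul_lt_of_lt hκ.aleph0_le hc hρ)
  · push_neg at hA
    rcases lt_or_ge ρ ℵ₀ with hρω | hρω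
    · exact pow_le hσℵ hρω
    · have hκω : ℵ₀ < κ := hρω.trans_lt hρ
      set σ := twoLT κ with hσdef
      obtain ⟨α, hα⟩ : ∃ α : Type 0, #α = ρ := ⟨ρ.out, mk_out ρ⟩
      have hβ : #σ.ord.ToType = σ := mk_ord_toType σ
      haveI hαne : Nonempty α := mk_ne_zero_iff.1
        (by rw [hα]; exact (aleph0_pos.trans_le hρω).ne')
      haveI hβne : Nonempty σ.ord.ToType := mk_ne_zero_iff.1
        (by rw [hβ]; exact (aleph0_pos.trans_le hσℵ).ne')
      set E := Ordinal.ToType.mk (o := σ.ord) with hEdef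
      have hbound : ∀ g : α → σ.ord.ToType, ∃ x : σ.ord.ToType, ∀ a : α, g a < x := by
        intro g
        set o : α → Ordinal := fun a => ((E.symm (g a) : Set.Iio σ.ord) : Ordinal) with hodef
        have ho : ∀ a, o a < σ.ord := fun a => (E.symm (g a)).2
        have hoc : ∀ a, (o a).card < σ := fun a => Cardinal.lt_ord.1 (ho a)
        choose c hc1 hc2 using fun a => exists_le_of_lt_twoLT hκ0 (hoc a)
        have hcs : (⨆ a, c a) < κ :=
          Cardinal.iSup_lt_of_isRegular hκ (by rw [hα]; exact hρ) hc1
        have hcard : ∀ a, (o a).card ≤ 2 ^ (⨆ a, c a) :=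
          fun a => (hc2 a).trans (power_le_power_left two_ne_zero
            (le_ciSup (Cardinal.bddAbove_range _) a))
        have h2cs : 2 ^ (⨆ a, c a) < σ := hA _ hcs
        set s := ⨆ a, (o a + 1) with hsdef
        have hs1 : ∀ a, o a < s := fun a =>
          lt_of_lt_of_le (lt_add_one _) (le_ciSup (Ordinal.bddAbove_range _) a)
        have hlim : Order.IsSuccLimit (σ.ord) := Cardinal.isSuccLimit_ord hσℵ
        have hsσ : s < σ.ord := by
          rcases eq_or_lt_of_le (Order.succ_le_of_lt h2cs) with heq | hlt
          · have h2inf : ℵ₀ ≤ 2 ^ (⨆ a, c a) := by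
              have h3 : ℵ₀ < σ := hκω.trans_le hκσ
              rw [← heq] at h3
              exact Order.lt_succ_iff.1 h3
            have hreg : σ.IsRegular := by rw [← heq]; exact isRegular_succ h2inf
            refine Ordinal.iSup_lt_ord ?_ (fun a => ?_)
            · rw [hreg.cof_eq, hα]; exact hρ.trans_le hκσ
            · rw [add_one_eq_succ]; exact hlim.succ_lt (ho a)
          · have hub : s ≤ (Order.succ ((2 : Cardinal) ^ (⨆ a, c a))).ord := by
              refine ciSup_le (fun a => ?_)
              rw [add_one_eq_succ, Order.succ_le_iff, Cardinal.lt_ord]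
              exact (hcard a).trans_lt (Order.lt_succ _)
            exact hub.trans_lt (Cardinal.ord_lt_ord.2 hlt)
        refine ⟨E ⟨s, hsσ⟩, fun a => ?_⟩
        have h1 : E.symm (g a) < E.symm (E ⟨s, hsσ⟩) := by
          rw [E.symm_apply_apply, ← Subtype.coe_lt_coe]
          exact hs1 a
        exact (OrderIso.lt_iff_lt E.symm).1 h1
      have hcover : (⋃ x : σ.ord.ToType, {g : α → σ.ord.ToType | ∀ a, g a < x}) = Set.univ := by
        refine Set.eq_univ_of_forall (fun g => ?_)
        obtain ⟨x, hx⟩ := hbound g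
        exact Set.mem_iUnion.2 ⟨x, hx⟩
      have hpiece : ∀ x : σ.ord.ToType, #{g : α → σ.ord.ToType | ∀ a, g a < x} ≤ σ := by
        intro x
        have hIio : #(Set.Iio x) ≤ ((E.symm x : Set.Iio σ.ord) : Ordinal).card := by
          have hemb : Nonempty (↥(Set.Iio x) ↪ ↥(Set.Iio ((E.symm x : Set.Iio σ.ord) : Ordinal))) := by
            refine ⟨⟨fun y => ⟨((E.symm y.1 : Set.Iio σ.ord) : Ordinal), ?_⟩, ?_⟩⟩
            · have : E.symm y.1 < E.symm x := (OrderIso.lt_iff_lt E.symm).2 y.2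
              exact Subtype.coe_lt_coe.2 this
            · intro y1 y2 h
              have hval : ((E.symm y1.1 : Set.Iio σ.ord) : Ordinal)
                  = ((E.symm y2.1 : Set.Iio σ.ord) : Ordinal) := by simpa using congrArg Subtype.val h
              have h1 : E.symm y1.1 = E.symm y2.1 := Subtype.ext hval
              exact Subtype.ext (E.symm.injective h1)
          have h2 := Cardinal.lift_mk_le'.2 hemb
          rw [Ordinal.mk_Iio_ordinal] at h2
          rw [Cardinal.lift_id'] at h2
          exact Cardinal.lift_le.1 h2
        have hseg : #(Set.Iio x) < σ := hIio.trans_lt (Cardinal.lt_ord.1 (E.symm x).2)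
        have h1 : #{g : α → σ.ord.ToType | ∀ a, g a < x} ≤ #(α → Set.Iio x) := by
          refine Cardinal.mk_le_of_injective
            (f := fun g => fun a => (⟨g.1 a, g.2 a⟩ : Set.Iio x)) ?_
          intro g1 g2 h
          apply Subtype.ext
          funext a
          exact congrArg Subtype.val (congrFun h a)
        have h2 : #(α → Set.Iio x) = #(Set.Iio x) ^ ρ := by
          rw [← hα, ← power_def]
        obtain ⟨c, hc, hc2⟩ := exists_le_of_lt_twoLT hκ0 hseg
        calc #{g : α → σ.ord.ToType | ∀ a, g a < x} ≤ #(Set.Iio x) ^ ρ := h1.trans_eq h2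
          _ ≤ (2 ^ c) ^ ρ := power_le_power_right hc2
          _ = 2 ^ (c * ρ) := by rw [← power_mul]
          _ ≤ σ := le_twoLT (mul_lt_of_lt hκ.aleph0_le hc hρ)
      calc σ ^ ρ = #(α → σ.ord.ToType) := by
            rw [← hα]
            conv_lhs => rw [← hβ]
            exact power_def _ _
        _ = #(⋃ x : σ.ord.ToType, {g : α → σ.ord.ToType | ∀ a, g a < x}) := by
            rw [hcover, mk_univ]
        _ ≤ #σ.ord.ToType * ⨆ x : σ.ord.ToType, #{g : α → σ.ord.ToType | ∀ a, g a < x} :=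
            mk_iUnion_le _
        _ ≤ σ * σ := mul_le_mul' hβ.le (ciSup_le hpiece)
        _ = σ := mul_eq_self hσℵ

section Bounds

private lemma mk_subtype_eq {Λ : Ordinal.{0}} (S : Set Ordinal.{0}) (hsub : S ⊆ Set.Iio Λ) :
    #{z : ↥(Set.Iio Λ) | z.1 ∈ S} = #S := by
  apply le_antisymm
  · exact Cardinal.mk_le_of_injective (f := fun z => (⟨z.1.1, z.2⟩ : S))
      (fun z1 z2 h => Subtype.ext (Subtype.ext (by simpa using congrArg Subtype.val h)))
  · refine Cardinal.mk_le_of_injective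
      (f := fun y => (⟨⟨y.1, hsub y.2⟩, y.2⟩ : {z : ↥(Set.Iio Λ) | z.1 ∈ S})) ?_
    intro y1 y2 h
    exact Subtype.ext (by simpa using congrArg (fun z : {z : ↥(Set.Iio Λ) | z.1 ∈ S} => z.1.1) h)

private lemma cof_subrel_Iio {lam : Cardinal.{0}} (hreg : lam.IsRegular) :
    (Ordinal.type (Subrel ((· < ·) : Ordinal.{0} → Ordinal.{0} → Prop) (· ∈ Set.Iio lam.ord))).cof
      = Cardinal.lift.{1} lam := by
  have htype : Ordinal.type (Subrel ((· < ·) : Ordinal.{0} → Ordinal.{0} → Prop)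
      (· ∈ Set.Iio lam.ord)) = Ordinal.lift.{1} lam.ord := type_lt_Iio lam.ord
  rw [htype, ← lift_cof, hreg.cof_eq]

lemma bounded_of_small {lam : Cardinal.{0}} (hreg : lam.IsRegular) {S : Set Ordinal.{0}}
    (hsub : S ⊆ Set.Iio lam.ord) (hcard : #S < Cardinal.lift.{1} lam) :
    ∃ b < lam.ord, ∀ y ∈ S, y ≤ b := by
  have hb : Set.Bounded (Subrel ((· < ·) : Ordinal.{0} → Ordinal.{0} → Prop)
      (· ∈ Set.Iio lam.ord)) {z : ↥(Set.Iio lam.ord) | z.1 ∈ S} := by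
    by_contra hnb
    rw [Set.not_bounded_iff] at hnb
    have hcof : IsCofinal {z : ↥(Set.Iio lam.ord) | z.1 ∈ S} := fun a => by
      obtain ⟨b, hb, hba⟩ := hnb a
      exact ⟨b, hb, not_lt.1 hba⟩
    have := Order.cof_le hcof
    rw [Ordinal.cof_Iio, ← lift_cof, hreg.cof_eq, mk_subtype_eq S hsub] at this
    exact absurd hcard (not_lt.2 this)
  obtain ⟨a, ha⟩ := hb
  exact ⟨a.1, a.2, fun y hy => le_of_lt (ha ⟨y, hsub hy⟩ hy)⟩

lemma large_of_unbounded {lam : Cardinal.{0}} (hreg : lam.IsRegular) {S : Set Ordinal.{0}}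
    (hsub : S ⊆ Set.Iio lam.ord) (hunb : ∀ γ < lam.ord, ∃ y ∈ S, γ < y) :
    Cardinal.mk S = Cardinal.lift.{1} lam := by
  apply le_antisymm
  · calc #S ≤ #(Set.Iio lam.ord) := Cardinal.mk_le_mk_of_subset hsub
      _ = Cardinal.lift.{1} lam := by rw [Ordinal.mk_Iio_ordinal, card_ord]
  · have hun : Set.Unbounded (Subrel ((· < ·) : Ordinal.{0} → Ordinal.{0} → Prop)
        (· ∈ Set.Iio lam.ord)) {z : ↥(Set.Iio lam.ord) | z.1 ∈ S} := by
      intro a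
      obtain ⟨y, hyS, hy⟩ := hunb a.1 a.2
      exact ⟨⟨y, hsub hyS⟩, hyS, fun h => absurd hy (not_lt_of_gt h)⟩
    have := Order.cof_le (s := {z : ↥(Set.Iio lam.ord) | z.1 ∈ S}) (fun a => by
      obtain ⟨b, hb, hba⟩ := hun a
      exact ⟨b, hb, not_lt.1 hba⟩)
    rw [Ordinal.cof_Iio, ← lift_cof, hreg.cof_eq, mk_subtype_eq S hsub] at this
    exact this

end Bounds

section OType

lemma otype_card (s : Set Ordinal.{0}) : (otype s).card = #s := by rw [otype]; exact Ordinal.card_type _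

lemma otype_le_of_subset_Iio {s : Set Ordinal.{0}} {o : Ordinal.{0}} (h : s ⊆ Set.Iio o) :
    otype s ≤ Ordinal.lift.{1} o := by
  rw [← type_lt_Iio o]
  refine RelEmbedding.ordinal_type_le ⟨⟨fun y => ⟨y.1, h y.2⟩, ?_⟩, ?_⟩
  · intro y1 y2 hy
    exact Subtype.ext (by simpa using congrArg Subtype.val hy)
  · intro y1 y2
    exact Iff.rfl

lemma otype_eq_of_subset_Iio {κ : Cardinal.{0}} {s : Set Ordinal.{0}}
    (h : s ⊆ Set.Iio κ.ord) (hcard : #s = Cardinal.lift.{1} κ) :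
    otype s = Ordinal.lift.{1} κ.ord := by
  refine le_antisymm (otype_le_of_subset_Iio h) ?_
  by_contra hlt
  push_neg at hlt
  rw [lift_ord, Cardinal.lt_ord, otype_card, hcard] at hlt
  exact lt_irrefl _ hlt

/-- appending a top point adds one to the order type -/
lemma otype_union_singleton {s : Set Ordinal.{0}} {δ : Ordinal.{0}}
    (h : ∀ y ∈ s, y < δ) : otype (s ∪ {δ}) = otype s + 1 := by
  have h1 : Ordinal.type (@emptyRelation PUnit.{2}) = 1 := by
    rw [Ordinal.type_eq_one_iff_unique]
    exact ⟨⟨PUnit.unit⟩, fun _ => rfl⟩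
  rw [← h1, otype, otype, ← type_sum_lex]
  apply Quotient.sound
  constructor
  refine RelIso.symm ⟨Equiv.ofBijective (fun z => Sum.recOn z
    (fun y => (⟨y.1, Or.inl y.2⟩ : ↥(s ∪ {δ})))
    (fun _ => (⟨δ, Or.inr rfl⟩ : ↥(s ∪ {δ})))) ⟨?_, ?_⟩, ?_⟩
  · rintro (y1 | u1) (y2 | u2) hz
    · have : y1.1 = y2.1 := by simpa using congrArg Subtype.val hz
      exact congrArg Sum.inl (Subtype.ext this)
    · exfalso
      have : y1.1 = δ := by simpa using congrArg Subtype.val hz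
      exact absurd (h y1.1 y1.2) (by rw [this]; exact lt_irrefl δ)
    · exfalso
      have : δ = y2.1 := by simpa using congrArg Subtype.val hz
      exact absurd (h y2.1 y2.2) (by rw [← this]; exact lt_irrefl δ)
    · cases u1; cases u2; rfl
  · rintro ⟨y, hy | hy⟩
    · exact ⟨Sum.inl ⟨y, hy⟩, rfl⟩
    · exact ⟨Sum.inr PUnit.unit, Subtype.ext (Set.mem_singleton_iff.1 hy).symm⟩
  · rintro (y1 | u1) (y2 | u2)
    · exact (Sum.lex_inl_inl (r := Subrel ((· < ·) : Ordinal → Ordinal → Prop) (· ∈ s))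
        (s := emptyRelation) (a₁ := y1) (a₂ := y2)).symm
    · simp only [Equiv.ofBijective]
      constructor
      · intro _; exact Sum.Lex.sep _ _
      · intro _
        exact h y1.1 y1.2
    · constructor
      · intro hz
        exact absurd (h y2.1 y2.2) (not_lt_of_gt hz)
      · intro hz
        cases hz
    · constructor
      · intro hz
        exact absurd hz (lt_irrefl δ)
      · intro hz
        cases hz
        rename_i hfalse
        exact (hfalse : False).elim

end OType

/-- **Dushnik–Miller–Erdős**: `λ → (λ, (κ+1)_{μ-1})²` for `λ = (2^{<κ})⁺`, `κ` regular, `μ < κ`: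
there are `A` and `i < μ` with `A` `i`-homogeneous and either `|A| = λ` with `i = 0`,
or `A` of order type `κ+1` with `i > 0`. -/
theorem dushnikMillerErdos (κ μ : Cardinal.{0}) (hκ : κ.IsRegular) (hμ : μ < κ)
    (f : Ordinal → Ordinal → Ordinal) (hf : ∀ a b, f a b < μ.ord) :
    ∃ A ⊆ Set.Iio (Order.succ (twoLT κ)).ord, ∃ i < μ.ord, Homog f A i ∧
      ((Cardinal.mk A = Cardinal.lift.{1,0} (Order.succ (twoLT κ)) ∧ i = 0) ∨
        (OT A (κ.ord + 1) ∧ 0 < i)) := by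
  classical
  rcases eq_or_ne μ 0 with hμ0 | hμ0
  · exact absurd (hf 0 0) (by simp [hμ0])
  set σ := twoLT κ with hσ
  set lam := Order.succ σ with hlam
  set Λ := lam.ord with hΛ
  set K := κ.ord with hK
  set M := μ.ord with hM
  have hκℵ : ℵ₀ ≤ κ := hκ.aleph0_le
  have hκσ : κ ≤ σ := self_le_twoLT κ
  have hσℵ : ℵ₀ ≤ σ := hκℵ.trans hκσ
  have hlamreg : lam.IsRegular := isRegular_succ hσℵ
  have hσlam : σ < lam := Order.lt_succ σ
  have hκlam : κ < lam := hκσ.trans_lt hσlam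
  have hμσ : μ ≤ σ := hμ.le.trans hκσ
  have hΛlim : Order.IsSuccLimit Λ := Cardinal.isSuccLimit_ord (hσℵ.trans hσlam.le)
  have hKlim : Order.IsSuccLimit K := Cardinal.isSuccLimit_ord hκℵ
  have hKcof : K.cof = κ := hκ.cof_eq
  have hΛcof : Λ.cof = lam := hlamreg.cof_eq
  have hKcard : K.card = κ := card_ord κ
  have hΛcard : Λ.card = lam := card_ord lam
  have hKΛ : K < Λ := by rw [hΛ, Cardinal.lt_ord, hKcard]; exact hκlam
  have hM0 : 0 < M := by rw [hM, Cardinal.lt_ord, Ordinal.card_zero]; exact hμ0.bot_lt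
  set W : Set Ordinal → Set Ordinal :=
    fun T => {y | y < Λ ∧ y ∈ T ∧ ∀ x ∈ T, x < y → f x y = 0} with hWdef
  have hWhom : ∀ T, Homog f (W T) 0 := fun T a ha b hb hab => hb.2.2 a ha.2.1 hab
  by_cases hcase : ∃ T : Set Ordinal, ∀ γ < Λ, ∃ y ∈ W T, γ < y
  · obtain ⟨T, hT⟩ := hcase
    exact ⟨W T, fun y hy => hy.1, 0, hM0, hWhom T,
      Or.inl ⟨large_of_unbounded hlamreg (fun y hy => hy.1) hT, rfl⟩⟩
  push_neg at hcase
  choose bnd hbnd1 hbnd2 using hcase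
  set Tset : Ordinal → Ordinal → (Ordinal → Ordinal × Ordinal) → Set Ordinal :=
    fun β ν g => {y | y < Λ ∧ β < y ∧ ∀ η < ν, f (g η).1 y = (g η).2} with hTdef
  set SE : Ordinal → Set Ordinal := fun d => {b | ∃ β < d, ∃ ν < K,
    ∃ g : Ordinal → Ordinal × Ordinal,
    (∀ η < ν, (g η).1 < d ∧ (g η).2 < M) ∧ b = bnd (Tset β ν g)} with hSEdef
  have hSEsub : ∀ d, SE d ⊆ Set.Iio Λ := by
    rintro d b ⟨β, _, ν, _, g, _, rfl⟩
    exact hbnd1 _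
  have hSEcard : ∀ d < Λ, #(SE d) < Cardinal.lift.{1} lam := by
    intro d hd
    have hdσ : d.card ≤ σ := by
      have h1 : d.card < lam := Cardinal.lt_ord.1 hd
      rw [hlam] at h1
      exact Order.lt_succ_iff.1 h1
    set Fam : ↥(Set.Iio K) → Type 1 :=
      fun ν => (↥(Set.Iio ν.1) → ↥(Set.Iio d) × ↥(Set.Iio M)) with hFamdef
    set gOf : (Σ ν : ↥(Set.Iio K), Fam ν) → Ordinal → Ordinal × Ordinal := fun p η =>
      if h : η < p.1.1 then ((p.2 ⟨η, h⟩).1.1, (p.2 ⟨η, h⟩).2.1) else (0, 0) with hgOfdef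
    set F : ↥(Set.Iio d) × (Σ ν : ↥(Set.Iio K), Fam ν) → Ordinal :=
      fun p => bnd (Tset p.1.1 p.2.1.1 (gOf p.2)) with hFdef
    have hsub2 : SE d ⊆ Set.range F := by
      rintro b ⟨β, hβ, ν, hν, g, hg, rfl⟩
      refine ⟨⟨⟨β, hβ⟩, ⟨⟨ν, hν⟩,
        fun η => (⟨⟨(g η.1).1, (hg η.1 η.2).1⟩, ⟨(g η.1).2, (hg η.1 η.2).2⟩⟩ :
          ↥(Set.Iio d) × ↥(Set.Iio M))⟩⟩, ?_⟩
      show bnd (Tset β ν _) = bnd (Tset β ν g)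
      congr 1
      ext y
      simp only [hTdef, Set.mem_setOf_eq]
      refine and_congr_right fun _ => and_congr_right fun _ => ?_
      refine forall_congr' fun η => forall_congr' fun hη => ?_
      rw [hgOfdef]
      simp only [dif_pos hη]
    have hmkKl : #(↥(Set.Iio K)) = Cardinal.lift.{1} κ := by rw [Ordinal.mk_Iio_ordinal, hKcard]
    have hFamle : ∀ ν : ↥(Set.Iio K), #(Fam ν) ≤ Cardinal.lift.{1} σ := by
      intro ν
      have hνκ : (ν.1).card < κ := Cardinal.lt_ord.1 ν.2
      have h2 : (d.card * μ) ^ (ν.1.card) ≤ σ := by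
        refine (power_le_power_right ?_).trans (twoLT_pow_le hκ hνκ)
        exact (mul_le_mul' hdσ hμσ).trans (mul_eq_self hσℵ).le
      have h1 : #(Fam ν) = #(↥(Set.Iio d) × ↥(Set.Iio M)) ^ #(↥(Set.Iio ν.1)) :=
        (power_def _ _).symm
      rw [h1, Cardinal.mk_prod, Ordinal.mk_Iio_ordinal, Ordinal.mk_Iio_ordinal, Ordinal.mk_Iio_ordinal]
      simp only [Cardinal.lift_id]
      rw [← Cardinal.lift_mul, ← Cardinal.lift_power]
      have hMμ : M.card = μ := by rw [hM, card_ord]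
      rw [hMμ]
      exact Cardinal.lift_le.2 h2
    have hSigma : #(Σ ν : ↥(Set.Iio K), Fam ν) ≤ Cardinal.lift.{1} σ := by
      calc #(Σ ν : ↥(Set.Iio K), Fam ν) = Cardinal.sum (fun ν => #(Fam ν)) := mk_sigma _
        _ ≤ Cardinal.sum (fun _ : ↥(Set.Iio K) => Cardinal.lift.{1} σ) :=
            Cardinal.sum_le_sum _ _ hFamle
        _ = #(↥(Set.Iio K)) * Cardinal.lift.{1} σ := Cardinal.sum_const' _ _
        _ = Cardinal.lift.{1} (κ * σ) := by rw [hmkKl, ← Cardinal.lift_mul]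
        _ ≤ Cardinal.lift.{1} σ :=
            Cardinal.lift_le.2 ((mul_le_mul' hκσ le_rfl).trans (mul_eq_self hσℵ).le)
    calc #(SE d) ≤ #(Set.range F) := Cardinal.mk_le_mk_of_subset hsub2
      _ ≤ #(↥(Set.Iio d) × Σ ν : ↥(Set.Iio K), Fam ν) := Cardinal.mk_range_le
      _ = #(↥(Set.Iio d)) * #(Σ ν : ↥(Set.Iio K), Fam ν) := by
          rw [Cardinal.mk_prod]
          simp only [Cardinal.lift_id]
      _ ≤ Cardinal.lift.{1} σ * Cardinal.lift.{1} σ := by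
          refine mul_le_mul' ?_ hSigma
          rw [Ordinal.mk_Iio_ordinal]
          exact Cardinal.lift_le.2 hdσ
      _ = Cardinal.lift.{1} σ := by rw [← Cardinal.lift_mul, mul_eq_self hσℵ]
      _ < Cardinal.lift.{1} lam := Cardinal.lift_lt.2 hσlam
  have hSEbdd : ∀ d < Λ, ∃ b < Λ, b ∈ upperBounds (SE d) := fun d hd => by
    obtain ⟨b, hb1, hb2⟩ := bounded_of_small hlamreg (hSEsub d) (hSEcard d hd)
    exact ⟨b, hb1, hb2⟩
  set e : Ordinal → Ordinal := fun d => max (sSup (SE d) + 1) (d + 1) with hedef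
  have he1 : ∀ d < Λ, e d < Λ := by
    intro d hd
    obtain ⟨b, hbΛ, hb⟩ := hSEbdd d hd
    have h1 : sSup (SE d) + 1 ≤ b + 1 := by
      exact add_le_add_left (csSup_le' hb) _
    refine max_lt (h1.trans_lt ?_) ?_
    · rw [add_one_eq_succ]; exact hΛlim.succ_lt hbΛ
    · rw [add_one_eq_succ]; exact hΛlim.succ_lt hd
  have he2 : ∀ d < Λ, ∀ β < d, ∀ ν < K, ∀ g : Ordinal → Ordinal × Ordinal,
      (∀ η < ν, (g η).1 < d ∧ (g η).2 < M) → bnd (Tset β ν g) < e d := by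
    intro d hd β hβ ν hν g hg
    obtain ⟨b, hbΛ, hb⟩ := hSEbdd d hd
    have hmem : bnd (Tset β ν g) ∈ SE d := ⟨β, hβ, ν, hν, g, hg, rfl⟩
    have h1 : bnd (Tset β ν g) ≤ sSup (SE d) := le_csSup ⟨b, hb⟩ hmem
    exact h1.trans_lt (lt_of_lt_of_le (lt_add_one _) (le_max_left _ _))
  have hed : ∀ d, d < e d := fun d => lt_of_lt_of_le (lt_add_one d) (le_max_right _ _)
  set δf : Ordinal → Ordinal :=
    Ordinal.lt_wf.fix (fun j ih => e (Ordinal.bsup j (fun j' h => ih j' h))) with hδfdef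
  have hδeq : ∀ j, δf j = e (Ordinal.bsup j (fun j' _ => δf j')) := fun j => by
    rw [hδfdef]; exact WellFounded.fix_eq _ _ j
  have hδΛ : ∀ j, j ≤ K → δf j < Λ := fun j =>
    Ordinal.induction (p := fun j => j ≤ K → δf j < Λ) j (fun j IH hj => by
      rw [hδeq]
      refine he1 _ (Ordinal.bsup_lt_ord ?_ ?_)
      · rw [hΛcof]
        exact ((Ordinal.card_le_card hj).trans_eq hKcard).trans_lt hκlam
      · exact fun j' hj' => IH j' hj' (hj'.le.trans hj))
  have hδmono : ∀ {j' j : Ordinal}, j' < j → δf j' < δf j := by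
    intro j' j h
    calc δf j' ≤ Ordinal.bsup j (fun j'' _ => δf j'') := Ordinal.le_bsup _ j' h
      _ < e _ := hed _
      _ = δf j := (hδeq j).symm
  have hδmono' : ∀ {j' j : Ordinal}, j' ≤ j → δf j' ≤ δf j := by
    intro j' j h
    rcases eq_or_lt_of_le h with rfl | h
    · exact le_rfl
    · exact (hδmono h).le
  set δstar := Ordinal.bsup K (fun j _ => δf j) with hδstardef
  have hδstarΛ : δstar < Λ :=
    Ordinal.bsup_lt_ord (by rw [hΛcof, hKcard]; exact hκlam) (fun j hj => hδΛ j hj.le)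
  have hδstarlt : ∀ j < K, δf j < δstar := by
    intro j hj
    have hj1 : j + 1 < K := by rw [add_one_eq_succ]; exact hKlim.succ_lt hj
    exact (hδmono (lt_add_one j)).trans_le (Ordinal.le_bsup _ (j+1) hj1)
  have huni : ∀ ν < K, ∀ p : Ordinal → Ordinal, (∀ η < ν, p η < δstar) →
      ∃ j < K, ∀ η < ν, p η < δf j := by
    intro ν hν p hp
    choose jm hjm1 hjm2 using fun η (h : η < ν) => (Ordinal.lt_bsup _).1 (hp η h)
    refine ⟨Ordinal.bsup ν (fun η h => jm η h + 1), Ordinal.bsup_lt_ord ?_ ?_, ?_⟩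
    · rw [hKcof]; exact Cardinal.lt_ord.1 hν
    · intro η h
      rw [add_one_eq_succ]
      exact hKlim.succ_lt (hjm1 η h)
    · intro η h
      exact (hjm2 η h).trans_le
        (hδmono' ((lt_add_one (jm η h)).le.trans (Ordinal.le_bsup _ η h)))
  have hclose : ∀ β < δstar, ∀ ν < K, ∀ g : Ordinal → Ordinal × Ordinal,
      (∀ η < ν, (g η).1 < δstar ∧ (g η).2 < M) → bnd (Tset β ν g) < δstar := by
    intro β hβ ν hν g hg
    obtain ⟨j1, hj1K, hj1⟩ := huni ν hν (fun η => (g η).1) (fun η h => (hg η h).1)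
    obtain ⟨j2, hj2K, hj2⟩ := (Ordinal.lt_bsup _).1 hβ
    set j0 := max j1 j2 with hj0def
    have hj0K : j0 < K := max_lt hj1K hj2K
    have hj01 : j0 + 1 < K := by rw [add_one_eq_succ]; exact hKlim.succ_lt hj0K
    set d := Ordinal.bsup (j0 + 1) (fun j' _ => δf j') with hddef
    have hdΛ : d < Λ := by
      refine Ordinal.bsup_lt_ord ?_ (fun j' hj' => hδΛ j' (hj'.le.trans hj01.le))
      rw [hΛcof]
      exact ((Ordinal.card_le_card hj01.le).trans_eq hKcard).trans_lt hκlam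
    have hδj0d : δf j0 ≤ d := Ordinal.le_bsup _ j0 (lt_add_one _)
    have hβd : β < d := (hj2.trans_le (hδmono' (le_max_right j1 j2))).trans_le hδj0d
    have hgd : ∀ η < ν, (g η).1 < d ∧ (g η).2 < M := fun η h =>
      ⟨((hj1 η h).trans_le (hδmono' (le_max_left j1 j2))).trans_le hδj0d, (hg η h).2⟩
    have h1 : bnd (Tset β ν g) < e d := he2 d hdΛ β hβd ν hν g hgd
    have h2 : e d = δf (j0 + 1) := (hδeq (j0 + 1)).symm
    rw [h2] at h1
    exact h1.trans (hδstarlt _ hj01)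
  set xs : Ordinal → Ordinal := Ordinal.lt_wf.fix (fun ξ ih =>
    sInf {y | y < δstar ∧ (∀ η (h : η < ξ), ih η h < y) ∧
      (∀ η (h : η < ξ), f (ih η h) y = f (ih η h) δstar) ∧ f y δstar ≠ 0}) with hxsdef
  set Y : Ordinal → Set Ordinal := fun ξ => {y | y < δstar ∧ (∀ η (_ : η < ξ), xs η < y) ∧
      (∀ η (_ : η < ξ), f (xs η) y = f (xs η) δstar) ∧ f y δstar ≠ 0} with hYdef
  have hxseq : ∀ ξ, xs ξ = sInf (Y ξ) := fun ξ => by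
    rw [hxsdef]; exact WellFounded.fix_eq _ _ ξ
  have hGood : ∀ ξ, ξ < K → xs ξ ∈ Y ξ := fun ξ =>
    Ordinal.induction (p := fun ξ => ξ < K → xs ξ ∈ Y ξ) ξ (fun ξ IH hξK => by
      have hxsδ : ∀ η < ξ, xs η < δstar := fun η hη => (IH η hη (hη.trans hξK)).1
      obtain ⟨j0, hj0K, hj0⟩ := huni ξ hξK xs hxsδ
      have hβ : δf j0 < δstar := hδstarlt j0 hj0K
      set g : Ordinal → Ordinal × Ordinal := fun η => (xs η, f (xs η) δstar) with hgdef
      have hgb : ∀ η < ξ, (g η).1 < δstar ∧ (g η).2 < M := fun η hη =>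
        ⟨(hj0 η hη).trans hβ, hf _ _⟩
      have hδT : δstar ∈ Tset (δf j0) ξ g := ⟨hδstarΛ, hβ, fun η hη => rfl⟩
      have hbm : bnd (Tset (δf j0) ξ g) < δstar := hclose _ hβ _ hξK g hgb
      have hδW : δstar ∉ W (Tset (δf j0) ξ g) := fun hmem =>
        absurd (hbnd2 _ _ hmem) (not_le.2 hbm)
      have hex : ∃ x ∈ Tset (δf j0) ξ g, x < δstar ∧ f x δstar ≠ 0 := by
        by_contra hno
        push_neg at hno
        exact hδW ⟨hδstarΛ, hδT, fun x hx hlt => hno x hx hlt⟩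
      obtain ⟨y, hyT, hyδ, hy0⟩ := hex
      have hymem : y ∈ Y ξ :=
        ⟨hyδ, fun η hη => (hj0 η hη).trans hyT.2.1, fun η hη => hyT.2.2 η hη, hy0⟩
      rw [hxseq ξ]
      exact csInf_mem ⟨y, hymem⟩)
  have hxsmono : ∀ {η ξ : Ordinal}, η < ξ → ξ < K → xs η < xs ξ :=
    fun {η ξ} h hK' => (hGood ξ hK').2.1 η h
  have hxscoh : ∀ {η ξ : Ordinal}, η < ξ → ξ < K → f (xs η) (xs ξ) = f (xs η) δstar :=
    fun {η ξ} h hK' => (hGood ξ hK').2.2.1 η h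
  have hxsδs : ∀ ξ, ξ < K → xs ξ < δstar := fun ξ h => (hGood ξ h).1
  have hxsne0 : ∀ ξ, ξ < K → f (xs ξ) δstar ≠ 0 := fun ξ h => (hGood ξ h).2.2.2
  set cfn : ↥(Set.Iio K) → ↥(Set.Iio M) := fun ξ => ⟨f (xs ξ.1) δstar, hf _ _⟩ with hcfndef
  have hmkK : #(↥(Set.Iio K)) = Cardinal.lift.{1} κ := by rw [Ordinal.mk_Iio_ordinal, hKcard]
  have hmkM : #(↥(Set.Iio M)) = Cardinal.lift.{1} μ := by
    rw [Ordinal.mk_Iio_ordinal, hM, card_ord]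
  obtain ⟨i', hi'⟩ := Cardinal.infinite_pigeonhole cfn
    (by rw [hmkK]; exact aleph0_le_lift.2 hκℵ)
    (by rw [hmkM, hmkK, ← Cardinal.lift_ord, ← lift_cof, hKcof]
        exact Cardinal.lift_lt.2 hμ)
  set i := i'.1 with hidef
  have hiM : i < M := i'.2
  set Kset : Set Ordinal := {ξ | ξ < K ∧ f (xs ξ) δstar = i} with hKsetdef
  have hKsetcard : #Kset = Cardinal.lift.{1} κ := by
    rw [← hmkK, ← hi']
    refine Cardinal.mk_congr ⟨fun ξ => ⟨⟨ξ.1, ξ.2.1⟩, Subtype.ext ξ.2.2⟩,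
      fun z => ⟨z.1.1, z.1.2, congrArg Subtype.val (z.2 : cfn z.1 = i')⟩, ?_, ?_⟩
    · intro ξ
      rfl
    · intro z
      exact Subtype.ext (Subtype.ext rfl)
  have hipos : 0 < i := by
    have hne : Nonempty ↥(cfn ⁻¹' {i'}) := by
      rw [← Cardinal.mk_ne_zero_iff, hi', hmkK]
      simp only [ne_eq, Cardinal.lift_eq_zero]
      exact hκ.pos.ne'
    obtain ⟨⟨ξ0, hξ0⟩⟩ := hne
    have hvi : f (xs ξ0.1) δstar = i := congrArg Subtype.val (hξ0 : cfn ξ0 = i')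
    exact pos_iff_ne_zero.2 (hvi ▸ hxsne0 ξ0.1 ξ0.2)
  set A : Set Ordinal := (xs '' Kset) ∪ {δstar} with hAdef
  have hsubA : A ⊆ Set.Iio Λ := by
    rintro y (⟨ξ, hξ, rfl⟩ | hy)
    · exact (hxsδs ξ hξ.1).trans hδstarΛ
    · rw [Set.mem_singleton_iff.1 hy]
      exact hδstarΛ
  have hxsinj : ∀ ξ ∈ Kset, ∀ ξ' ∈ Kset, xs ξ = xs ξ' → ξ = ξ' := by
    intro ξ hξ ξ' hξ' h
    rcases lt_trichotomy ξ ξ' with hlt | heq | hgt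
    · exact absurd h (ne_of_lt (hxsmono hlt hξ'.1))
    · exact heq
    · exact absurd h.symm (ne_of_lt (hxsmono hgt hξ.1))
  have hHom : Homog f A i := by
    rintro a (⟨ξ, hξ, rfl⟩ | ha) b (⟨ξ', hξ', rfl⟩ | hb) hab
    · have hne : ξ ≠ ξ' := fun h => absurd (h ▸ hab) (lt_irrefl _)
      rcases lt_or_gt_of_ne hne with hlt | hgt
      · rw [hxscoh hlt hξ'.1]
        exact hξ.2
      · exact absurd hab (not_lt_of_gt (hxsmono hgt hξ.1))
    · rw [Set.mem_singleton_iff.1 hb]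
      exact hξ.2
    · rw [Set.mem_singleton_iff.1 ha] at hab
      exact absurd hab (not_lt_of_gt (hxsδs ξ' hξ'.1))
    · rw [Set.mem_singleton_iff.1 ha, Set.mem_singleton_iff.1 hb] at hab
      exact absurd hab (lt_irrefl _)
  have himg : otype (xs '' Kset) = otype Kset := by
    refine (Ordinal.type_eq.2 ⟨?_⟩).symm
    refine ⟨Equiv.ofBijective (fun ξ => ⟨xs ξ.1, Set.mem_image_of_mem xs ξ.2⟩) ⟨?_, ?_⟩, ?_⟩
    · intro ξ1 ξ2 h
      exact Subtype.ext (hxsinj ξ1.1 ξ1.2 ξ2.1 ξ2.2 (by simpa using congrArg Subtype.val h))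
    · rintro ⟨y, ξ, hξ, rfl⟩
      exact ⟨⟨ξ, hξ⟩, rfl⟩
    · intro ξ1 ξ2
      show xs ξ1.1 < xs ξ2.1 ↔ ξ1.1 < ξ2.1
      constructor
      · intro h
        rcases lt_trichotomy ξ1.1 ξ2.1 with hlt | heq | hgt
        · exact hlt
        · exact absurd (heq ▸ h) (lt_irrefl _)
        · exact absurd h (not_lt_of_gt (hxsmono hgt ξ1.2.1))
      · intro h
        exact hxsmono h ξ2.2.1
  have hKsetot : otype Kset = Ordinal.lift.{1} K :=
    otype_eq_of_subset_Iio (fun ξ hξ => hξ.1) hKsetcard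
  have hOT : OT A (K + 1) := by
    have htop : ∀ y ∈ xs '' Kset, y < δstar := by
      rintro y ⟨ξ, hξ, rfl⟩
      exact hxsδs ξ hξ.1
    rw [OT, hAdef, otype_union_singleton htop, himg, hKsetot]
    rw [Ordinal.lift_add, Ordinal.lift_one]
  exact ⟨A, hsubA, i, hiM, hHom, Or.inr ⟨hOT, hipos⟩⟩
end

section
/- Let f : [λ]^2 → k be a coloring, ρ an indecomposable ordinal, and σ a finite sequence of colors. If x ⊆ λ is (ρ,σ)-good for f and x = ⋃_{j<m} t_j is a finite union, then there exist j < m and y ⊆ t_j such that y is (ρ,σ)-good for f. -/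
open Cardinal Ordinal

/-- `Good f ρ σ x`: `x` is `(ρ,σ)`-good for the coloring `f`.  A singleton is `(ρ,⟨⟩)`-good;
`x` is `(ρ, σ⌢⟨i⟩)`-good iff `x = ⋃_{ξ<ρ} x_ξ` with each `x_ξ` `(ρ,σ)`-good,
`sup x_ξ < inf x_η` for `ξ < η`, and all cross pairs colored `i`. -/
inductive Good (f : Ordinal → Ordinal → ℕ) (ρ : Ordinal.{0}) : List ℕ → Set Ordinal.{0} → Prop
  | nil (a : Ordinal) : Good f ρ [] {a}
  | cons (σ : List ℕ) (i : ℕ) (x : Ordinal → Set Ordinal)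
      (hgood : ∀ ξ < ρ, Good f ρ σ (x ξ))
      (hsep : ∀ ξ < ρ, ∀ η < ρ, ξ < η → sSup (x ξ) < sInf (x η))
      (hcol : ∀ ξ < ρ, ∀ η < ρ, ξ < η → ∀ a ∈ x ξ, ∀ b ∈ x η, f a b = i) :
      Good f ρ (σ ++ [i]) (⋃ ξ ∈ Set.Iio ρ, x ξ)


namespace NaturalOps

universe v

/-- natural (Hessenberg) sum of ordinals -/
noncomputable def nadd (a b : Ordinal.{v}) : Ordinal.{v} :=
  max (⨆ a' : Set.Iio a, Order.succ (nadd a'.1 b)) (⨆ b' : Set.Iio b, Order.succ (nadd a b'.1))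
termination_by (a, b)
decreasing_by
  · exact Prod.Lex.left _ _ a'.2
  · exact Prod.Lex.right _ b'.2

infixl:65 " ♯ " => NaturalOps.nadd

theorem nadd_le_iff {a b c : Ordinal.{v}} :
    a ♯ b ≤ c ↔ (∀ a' < a, a' ♯ b < c) ∧ ∀ b' < b, a ♯ b' < c := by
  rw [nadd, max_le_iff, Ordinal.iSup_le_iff, Ordinal.iSup_le_iff]
  simp only [Order.succ_le_iff, Subtype.forall, Set.mem_Iio]

theorem nadd_lt_nadd_right {b c : Ordinal.{v}} (h : b < c) (a : Ordinal.{v}) : b ♯ a < c ♯ a :=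
  lt_of_not_ge fun h' => lt_irrefl _ ((nadd_le_iff.1 h').1 b h)

theorem nadd_lt_nadd_left {b c : Ordinal.{v}} (h : b < c) (a : Ordinal.{v}) : a ♯ b < a ♯ c :=
  lt_of_not_ge fun h' => lt_irrefl _ ((nadd_le_iff.1 h').2 b h)

theorem nadd_le_nadd_right {b c : Ordinal.{v}} (h : b ≤ c) (a : Ordinal.{v}) : b ♯ a ≤ c ♯ a := by
  rcases h.eq_or_lt with rfl | h
  · exact le_rfl
  · exact (nadd_lt_nadd_right h a).le

theorem nadd_le_nadd_left {b c : Ordinal.{v}} (h : b ≤ c) (a : Ordinal.{v}) : a ♯ b ≤ a ♯ c := by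
  rcases h.eq_or_lt with rfl | h
  · exact le_rfl
  · exact (nadd_lt_nadd_left h a).le

theorem nadd_lt_nadd_of_lt_of_le {a b c d : Ordinal.{v}} (h1 : a < b) (h2 : c ≤ d) :
    a ♯ c < b ♯ d :=
  (nadd_lt_nadd_right h1 c).trans_le (nadd_le_nadd_left h2 b)

theorem nadd_lt_nadd_of_le_of_lt {a b c d : Ordinal.{v}} (h1 : a ≤ b) (h2 : c < d) :
    a ♯ c < b ♯ d :=
  (nadd_le_nadd_right h1 c).trans_lt (nadd_lt_nadd_left h2 b)

@[simp]
theorem zero_nadd_zero : (0 : Ordinal.{v}) ♯ 0 = 0 :=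
  le_antisymm (nadd_le_iff.2 ⟨fun a' h => absurd h (not_lt_of_ge zero_le),
    fun b' h => absurd h (not_lt_of_ge zero_le)⟩) zero_le

end NaturalOps

section AuxGoodCover
open Set NaturalOps

universe u

lemma aux_decomp (e : Ordinal.{u}) : ∀ k : ℕ, ∀ a : Ordinal.{u}, a < ω ^ e * (k + 1 : ℕ) →
    ∃ k' : ℕ, k' ≤ k ∧ ∃ r < ω ^ e, a = ω ^ e * (k' : ℕ) + r := by
  intro k
  induction k with
  | zero =>
    intro a ha
    refine ⟨0, le_refl _, a, ?_, by simp⟩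
    simpa using ha
  | succ k IH =>
    intro a ha
    rcases lt_or_ge a (ω ^ e * (k + 1 : ℕ)) with h | h
    · obtain ⟨k', hk', hr⟩ := IH a h
      exact ⟨k', hk'.trans (Nat.le_succ k), hr⟩
    · refine ⟨k + 1, le_refl _, a - ω ^ e * (k + 1 : ℕ), ?_, ?_⟩
      · rw [Ordinal.sub_lt_of_le h]
        have hc : (((k + 1) + 1 : ℕ) : Ordinal) = ((k + 1 : ℕ) : Ordinal) + 1 := by push_cast; ring
        rw [hc, mul_add_one] at ha
        exact ha
      · rw [Ordinal.add_sub_cancel_of_le h]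

lemma aux_cast (k : ℕ) : (((k + 1) : ℕ) : Ordinal.{u}) = ((k : ℕ) : Ordinal) + 1 := by
  push_cast; ring

/-- comparison of decompositions -/

lemma aux_comp {e : Ordinal.{u}} {k k' : ℕ} {r r' : Ordinal.{u}} (hr : r < ω ^ e)
    (hr' : r' < ω ^ e) (hlt : ω ^ e * (k' : ℕ) + r' < ω ^ e * (k : ℕ) + r) :
    k' < k ∨ (k' = k ∧ r' < r) := by
  rcases lt_trichotomy k' k with h | h | h
  · exact Or.inl h
  · subst h
    exact Or.inr ⟨rfl, by rwa [add_lt_add_iff_left] at hlt⟩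
  · exfalso
    have : ω ^ e * (k : ℕ) + r < ω ^ e * (k' : ℕ) := by
      calc ω ^ e * (k : ℕ) + r < ω ^ e * (k : ℕ) + ω ^ e := by rwa [add_lt_add_iff_left]
        _ = ω ^ e * ((k + 1 : ℕ)) := by rw [aux_cast, mul_add_one]
        _ ≤ ω ^ e * (k' : ℕ) := by
            apply mul_le_mul_right
            exact_mod_cast Nat.cast_le.2 h
    exact absurd (hlt.trans this) (by simp [le_add_right])

lemma aux_block (e : Ordinal.{u}) (he : ∀ u v : Ordinal.{u}, u < ω ^ e → v < ω ^ e → u ♯ v < ω ^ e) :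
    ∀ a b : Ordinal.{u}, ∀ k m : ℕ, ∀ r s : Ordinal.{u}, r < ω ^ e → s < ω ^ e →
      a = ω ^ e * (k : ℕ) + r → b = ω ^ e * (m : ℕ) + s →
      a ♯ b ≤ ω ^ e * ((k + m : ℕ)) + (r ♯ s) := by
  intro a
  induction a using Ordinal.induction with
  | h a IHa =>
    intro b
    induction b using Ordinal.induction with
    | h b IHb =>
      intro k m r s hr hs hae hbe
      rw [nadd_le_iff]
      constructor
      · -- ∀ a' < a, a' ♯ b < X
        intro a' ha'
        have ha'lt : a' < ω ^ e * (k + 1 : ℕ) := by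
          rw [aux_cast, mul_add_one]
          exact ha'.trans_le (hae ▸ add_le_add_right hr.le _)
        obtain ⟨k', hk', r', hr', hae'⟩ := aux_decomp e k a' ha'lt
        have hb := IHa a' ha' b k' m r' s hr' hs hae' hbe
        rcases aux_comp hr hr' (hae ▸ hae' ▸ ha') with h | ⟨rfl, h⟩
        · calc a' ♯ b ≤ ω ^ e * ((k' + m : ℕ)) + (r' ♯ s) := hb
            _ < ω ^ e * ((k' + m : ℕ)) + ω ^ e := by
                rw [add_lt_add_iff_left]; exact he _ _ hr' hs
            _ = ω ^ e * ((k' + m + 1 : ℕ)) := by rw [aux_cast, mul_add_one]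
            _ ≤ ω ^ e * ((k + m : ℕ)) := by
                apply mul_le_mul_right; exact Nat.cast_le.2 (by omega)
            _ ≤ ω ^ e * ((k + m : ℕ)) + (r ♯ s) := le_add_right le_rfl
        · calc a' ♯ b ≤ ω ^ e * ((k' + m : ℕ)) + (r' ♯ s) := hb
            _ < ω ^ e * ((k' + m : ℕ)) + (r ♯ s) := by
                rw [add_lt_add_iff_left]; exact nadd_lt_nadd_right h _
      · -- ∀ b' < b, a ♯ b' < X
        intro b' hb'
        have hb'lt : b' < ω ^ e * (m + 1 : ℕ) := by
          rw [aux_cast, mul_add_one]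
          exact hb'.trans_le (hbe ▸ add_le_add_right hs.le _)
        obtain ⟨m', hm', s', hs', hbe'⟩ := aux_decomp e m b' hb'lt
        have hb := IHb b' hb' k m' r s' hr hs' hae hbe'
        rcases aux_comp hs hs' (hbe ▸ hbe' ▸ hb') with h | ⟨rfl, h⟩
        · calc a ♯ b' ≤ ω ^ e * ((k + m' : ℕ)) + (r ♯ s') := hb
            _ < ω ^ e * ((k + m' : ℕ)) + ω ^ e := by
                rw [add_lt_add_iff_left]; exact he _ _ hr hs'
            _ = ω ^ e * ((k + m' + 1 : ℕ)) := by rw [aux_cast, mul_add_one]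
            _ ≤ ω ^ e * ((k + m : ℕ)) := by
                apply mul_le_mul_right; exact Nat.cast_le.2 (by omega)
            _ ≤ ω ^ e * ((k + m : ℕ)) + (r ♯ s) := le_add_right le_rfl
        · calc a ♯ b' ≤ ω ^ e * ((k + m' : ℕ)) + (r ♯ s') := hb
            _ < ω ^ e * ((k + m' : ℕ)) + (r ♯ s) := by
                rw [add_lt_add_iff_left]; exact nadd_lt_nadd_left h _

lemma aux_small_of_opow {γ : Ordinal.{u}} (hγ : γ ≠ 0) {c : Ordinal.{u}} (hc : c < ω ^ γ) :
    ∃ e < γ, ∃ n : ℕ, c < ω ^ e * (n + 1 : ℕ) := by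
  rcases zero_or_succ_or_isSuccLimit γ with rfl | ⟨δ, rfl⟩ | hlim
  · exact absurd rfl hγ
  · rw [opow_succ] at hc
    obtain ⟨c', hc'ω, hcc⟩ := (lt_mul_iff_of_isSuccLimit isSuccLimit_omega0).1 hc
    obtain ⟨n, rfl⟩ := lt_omega0.1 hc'ω
    refine ⟨δ, Order.lt_succ δ, n, hcc.trans_le ?_⟩
    apply mul_le_mul_right
    exact Nat.cast_le.2 (Nat.le_succ n)
  · obtain ⟨e, he, hce⟩ := (lt_opow_of_isSuccLimit omega0_ne_zero hlim).1 hc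
    refine ⟨e, he, 0, hce.trans_le ?_⟩
    simp

lemma aux_nadd_opow : ∀ γ : Ordinal.{u}, ∀ a b : Ordinal.{u}, a < ω ^ γ → b < ω ^ γ →
    a ♯ b < ω ^ γ := by
  intro γ
  induction γ using Ordinal.induction with
  | h γ IH =>
    intro a b ha hb
    rcases eq_or_ne γ 0 with rfl | hγ
    · rw [opow_zero] at ha hb ⊢
      rw [Ordinal.lt_one_iff_zero] at ha hb
      subst ha; subst hb; simpa using zero_lt_one
    · obtain ⟨e₁, he₁, n, hn⟩ := aux_small_of_opow hγ ha
      obtain ⟨e₂, he₂, m, hm⟩ := aux_small_of_opow hγ hb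
      set e := max e₁ e₂ with hedef
      have he : e < γ := max_lt he₁ he₂
      have hmono : ∀ i, ω ^ e₁ * (i : ℕ) ≤ ω ^ e * (i : ℕ) := fun i =>
        mul_le_mul_left (opow_le_opow_right omega0_pos (le_max_left _ _)) _
      have hmono' : ∀ i, ω ^ e₂ * (i : ℕ) ≤ ω ^ e * (i : ℕ) := fun i =>
        mul_le_mul_left (opow_le_opow_right omega0_pos (le_max_right _ _)) _
      obtain ⟨k, hk, r, hr, hae⟩ := aux_decomp e n a (hn.trans_le (hmono _))
      obtain ⟨m', hm', s, hs, hbe⟩ := aux_decomp e m b (hm.trans_le (hmono' _))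
      have hclosed := IH e he
      have hmain := aux_block e hclosed a b k m' r s hr hs hae hbe
      have h1 : a ♯ b < ω ^ e * ((k + m' + 1 : ℕ)) := by
        calc a ♯ b ≤ ω ^ e * ((k + m' : ℕ)) + (r ♯ s) := hmain
          _ < ω ^ e * ((k + m' : ℕ)) + ω ^ e := by
              rw [add_lt_add_iff_left]; exact hclosed _ _ hr hs
          _ = ω ^ e * ((k + m' + 1 : ℕ)) := by rw [aux_cast, mul_add_one]
      refine h1.trans_le ?_
      calc ω ^ e * ((k + m' + 1 : ℕ)) ≤ ω ^ e * ω :=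
            (mul_le_mul_right (nat_lt_omega0 _).le _)
        _ = ω ^ (e + 1) := (opow_succ ω e).symm
        _ ≤ ω ^ γ := opow_le_opow_right omega0_pos (Order.add_one_le_of_lt he)

lemma otype_mono {S T : Set Ordinal.{0}} (h : S ⊆ T) : otype S ≤ otype T :=
  RelEmbedding.ordinal_type_le
    ⟨⟨Set.inclusion h, Set.inclusion_injective h⟩, Iff.rfl⟩

lemma otype_lt {S T : Set Ordinal.{0}} (hST : S ⊆ T) {t : Ordinal.{0}} (ht : t ∈ T)
    (h : ∀ x ∈ S, x < t) : otype S < otype T := by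
  have h1 : otype S ≤ typein (Subrel ((· < ·) : Ordinal → Ordinal → Prop) (· ∈ T)) ⟨t, ht⟩ := by
    rw [← type_subrel]
    exact RelEmbedding.ordinal_type_le
      ⟨⟨fun a => ⟨⟨a.1, hST a.2⟩, h a.1 a.2⟩,
        fun a b hab => by
          apply Subtype.ext
          exact congrArg (fun x => x.1.1) hab⟩, Iff.rfl⟩
  exact h1.trans_lt (typein_lt_type _ _)

lemma otype_bound {U : Set Ordinal.{0}} (g : U → Ordinal.{1})
    (hg : ∀ u v : U, u.1 < v.1 → g u < g v) {β : Ordinal.{1}} (hβ : ∀ u, g u < β) :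
    otype U ≤ β := by
  set r := Subrel ((· < ·) : Ordinal → Ordinal → Prop) (· ∈ U) with hr
  have key : ∀ a : U, typein r a ≤ g a := by
    by_contra hcon
    push_neg at hcon
    obtain ⟨a, ha⟩ := hcon
    obtain ⟨a₀, ha₀, hmin⟩ := (IsWellFounded.wf (r := r)).has_min {a : U | g a < typein r a} ⟨a, ha⟩
    have hlt : g a₀ < type r := (ha₀.trans (typein_lt_type r a₀))
    obtain ⟨b, hb⟩ := typein_surj r hlt
    have hrba : r b a₀ := by
      rw [← typein_lt_typein r]; rw [hb]; exact ha₀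
    have hnb : ¬ g b < typein r b := fun hbmem => hmin b hbmem hrba
    push_neg at hnb
    have : g a₀ ≤ g b := hb ▸ hnb
    exact absurd (this.trans_lt (hg b a₀ hrba)) (lt_irrefl _)
  by_contra hcon
  push_neg at hcon
  obtain ⟨a, ha⟩ := typein_surj r hcon
  have h2 := (key a).trans_lt (hβ a)
  rw [ha] at h2
  exact lt_irrefl _ h2

lemma otype_union (S T : Set Ordinal.{0}) : otype (S ∪ T) ≤ otype S ♯ otype T := by
  apply otype_bound (fun c => otype (S ∩ Set.Iio c.1) ♯ otype (T ∩ Set.Iio c.1))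
  · intro u v huv
    have hS : otype (S ∩ Set.Iio u.1) ≤ otype (S ∩ Set.Iio v.1) :=
      otype_mono (Set.inter_subset_inter_right _ (Set.Iio_subset_Iio huv.le))
    have hT : otype (T ∩ Set.Iio u.1) ≤ otype (T ∩ Set.Iio v.1) :=
      otype_mono (Set.inter_subset_inter_right _ (Set.Iio_subset_Iio huv.le))
    rcases u.2 with hu | hu
    · refine nadd_lt_nadd_of_lt_of_le ?_ hT
      exact otype_lt (Set.inter_subset_inter_right _ (Set.Iio_subset_Iio huv.le))
        ⟨hu, huv⟩ (fun x hx => hx.2)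
    · refine nadd_lt_nadd_of_le_of_lt hS ?_
      exact otype_lt (Set.inter_subset_inter_right _ (Set.Iio_subset_Iio huv.le))
        ⟨hu, huv⟩ (fun x hx => hx.2)
  · intro c
    rcases c.2 with hc | hc
    · exact nadd_lt_nadd_of_lt_of_le
        (otype_lt Set.inter_subset_left hc (fun x hx => hx.2))
        (otype_mono Set.inter_subset_left)
    · exact nadd_lt_nadd_of_le_of_lt
        (otype_mono Set.inter_subset_left)
        (otype_lt Set.inter_subset_left hc (fun x hx => hx.2))

lemma aux_lift_opow (γ : Ordinal.{0}) :
    Ordinal.lift.{1} (ω ^ γ) = (ω : Ordinal.{1}) ^ (Ordinal.lift.{1} γ) := by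
  induction γ using Ordinal.induction with
  | h γ IH =>
    rcases zero_or_succ_or_isSuccLimit γ with rfl | ⟨δ, rfl⟩ | hlim
    · simp
    · rw [opow_succ, Ordinal.lift_mul, Ordinal.lift_succ, opow_succ, IH δ (Order.lt_succ δ), lift_omega0]
    · apply le_antisymm
      · apply le_of_forall_lt
        intro x hx
        obtain ⟨x', hx', rfl⟩ := Ordinal.lt_lift_iff.1 hx
        obtain ⟨e, he, hxe⟩ := (lt_opow_of_isSuccLimit omega0_ne_zero hlim).1 hx'
        calc Ordinal.lift.{1} x' < Ordinal.lift.{1} (ω ^ e) := Ordinal.lift_lt.2 hxe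
          _ = (ω : Ordinal.{1}) ^ Ordinal.lift.{1} e := IH e he
          _ ≤ _ := opow_le_opow_right omega0_pos (Ordinal.lift_le.2 he.le)
      · apply le_of_forall_lt
        intro x hx
        obtain ⟨e₁, he₁, hxe⟩ := (lt_opow_of_isSuccLimit omega0_ne_zero (isSuccLimit_lift.2 hlim)).1 hx
        obtain ⟨e, he, rfl⟩ := Ordinal.lt_lift_iff.1 he₁
        calc x < (ω : Ordinal.{1}) ^ Ordinal.lift.{1} e := hxe
          _ = Ordinal.lift.{1} (ω ^ e) := (IH e he).symm
          _ ≤ Ordinal.lift.{1} (ω ^ γ) :=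
              Ordinal.lift_le.2 (opow_le_opow_right omega0_pos he.le)

lemma otype_Iio (ρ : Ordinal.{0}) : otype (Set.Iio ρ) = Ordinal.lift.{1} ρ :=
  by rw [← typein_ordinal]; rfl

lemma otype_partition : ∀ (m : ℕ) (A : Fin m → Set Ordinal.{0}) (β : Ordinal.{1}),
    0 < β → (∀ a b : Ordinal.{1}, a < β → b < β → a ♯ b < β) → β ≤ otype (⋃ j, A j) →
    ∃ j, β ≤ otype (A j) := by
  intro m
  induction m with
  | zero =>
    intro A β hβ0 _ hle
    rw [Set.iUnion_of_empty] at hle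
    have : otype (∅ : Set Ordinal.{0}) = 0 := type_eq_zero_iff_isEmpty.2 (by infer_instance)
    rw [this] at hle
    exact absurd (hβ0.trans_le hle) (lt_irrefl _)
  | succ m IHm =>
    intro A β hβ0 hcl hle
    have hsplit : (⋃ j, A j) = A 0 ∪ ⋃ j : Fin m, A j.succ := by
      ext x
      simp [Fin.exists_fin_succ]
    rw [hsplit] at hle
    by_cases h0 : β ≤ otype (A 0)
    · exact ⟨0, h0⟩
    · by_cases h1 : β ≤ otype (⋃ j : Fin m, A j.succ)
      · obtain ⟨j, hj⟩ := IHm (fun j => A j.succ) β hβ0 hcl h1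
        exact ⟨j.succ, hj⟩
      · push_neg at h0 h1
        have := hle.trans (otype_union _ _)
        exact absurd (this.trans_lt (hcl _ _ h0 h1)) (lt_irrefl _)

lemma exists_mono_into {ρ : Ordinal.{0}} {S : Set Ordinal.{0}}
    (h : Ordinal.lift.{1} ρ ≤ otype S) :
    ∃ e : Ordinal.{0} → Ordinal.{0}, (∀ ξ η, ξ < ρ → η < ρ → ξ < η → e ξ < e η) ∧
      ∀ ξ, ξ < ρ → e ξ ∈ S := by
  rw [← otype_Iio] at h
  obtain ⟨f⟩ := type_le_iff'.1 h
  refine ⟨fun ξ => if hξ : ξ < ρ then (f ⟨ξ, hξ⟩).1 else 0, ?_, ?_⟩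
  · intro ξ η hξ hη hlt
    simp only [dif_pos hξ, dif_pos hη]
    exact f.map_rel_iff.2 hlt
  · intro ξ hξ
    simp only [dif_pos hξ]
    exact (f ⟨ξ, hξ⟩).2

lemma exists_fiber_embed {γ : Ordinal.{0}} {m : ℕ} (A : Fin m → Set Ordinal.{0})
    (hA : Set.Iio (ω ^ γ) ⊆ ⋃ j, A j) :
    ∃ j : Fin m, ∃ e : Ordinal → Ordinal,
      (∀ ξ η, ξ < ω ^ γ → η < ω ^ γ → ξ < η → e ξ < e η) ∧
      ∀ ξ, ξ < ω ^ γ → e ξ ∈ A j ∧ e ξ < ω ^ γ := by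
  have h1 : Ordinal.lift.{1} (ω ^ γ) ≤ otype (⋃ j, (A j ∩ Set.Iio (ω ^ γ))) := by
    rw [← otype_Iio]
    apply otype_mono
    intro x hx
    obtain ⟨_, ⟨⟨j, rfl⟩, hxj⟩⟩ := hA hx
    exact Set.mem_iUnion.2 ⟨j, hxj, hx⟩
  have h0 : (0 : Ordinal.{1}) < Ordinal.lift.{1} (ω ^ γ) := by
    rw [aux_lift_opow]
    exact opow_pos _ omega0_pos
  have hcl : ∀ a b : Ordinal.{1}, a < Ordinal.lift.{1} (ω ^ γ) → b < Ordinal.lift.{1} (ω ^ γ) →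
      a ♯ b < Ordinal.lift.{1} (ω ^ γ) := by
    intro a b ha hb
    rw [aux_lift_opow] at ha hb ⊢
    exact aux_nadd_opow _ a b ha hb
  obtain ⟨j, hj⟩ := otype_partition m _ _ h0 hcl h1
  obtain ⟨e, he1, he2⟩ := exists_mono_into hj
  exact ⟨j, e, he1, fun ξ hξ => (he2 ξ hξ)⟩

lemma good_nonempty {f : Ordinal → Ordinal → ℕ} {ρ : Ordinal.{0}} {σ : List ℕ}
    {x : Set Ordinal} (h : Good f ρ σ x) (hρ : 0 < ρ) : x.Nonempty := by
  induction h with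
  | nil a => exact ⟨a, rfl⟩
  | cons σ i xf hg hs hc IH =>
    obtain ⟨b, hb⟩ := IH 0 hρ
    exact ⟨b, Set.mem_biUnion hρ hb⟩

lemma good_bddAbove {f : Ordinal → Ordinal → ℕ} {ρ : Ordinal.{0}} {σ : List ℕ}
    {x : Set Ordinal} (h : Good f ρ σ x) : BddAbove x := by
  induction h with
  | nil a => exact bddAbove_singleton
  | cons σ i xf hg hs hc IH =>
    rw [Ordinal.bddAbove_iff_small]
    have h1 : Small.{0} (Set.Iio ρ) := by
      rw [← Ordinal.bddAbove_iff_small]; exact bddAbove_Iio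
    exact @small_biUnion _ _ (Set.Iio ρ) h1 (fun ξ _ => xf ξ)
      (fun ξ hξ => Ordinal.bddAbove_iff_small.1 (IH ξ hξ))

lemma good_cover (f : Ordinal → Ordinal → ℕ) (γ : Ordinal.{0}) :
    ∀ (σ : List ℕ) (x : Set Ordinal), Good f (ω ^ γ) σ x →
    ∀ (m : ℕ) (t : Fin m → Set Ordinal), x ⊆ (⋃ j, t j) →
    ∃ j : Fin m, ∃ y, y ⊆ t j ∧ Good f (ω ^ γ) σ y := by
  have hρ0 : (0 : Ordinal) < ω ^ γ := opow_pos γ omega0_pos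
  intro σ x hg
  induction hg with
  | nil a =>
    intro m t hc
    obtain ⟨_, ⟨⟨j, rfl⟩, haj⟩⟩ := hc (Set.mem_singleton a)
    exact ⟨j, {a}, Set.singleton_subset_iff.2 haj, Good.nil a⟩
  | cons σ i xf hgood hsep hcol IH =>
    intro m t hc
    have H : ∀ ξ : Ordinal, ξ < ω ^ γ → ∃ jy : Fin m × Set Ordinal,
        jy.2 ⊆ t jy.1 ∩ xf ξ ∧ Good f (ω ^ γ) σ jy.2 := by
      intro ξ hξ
      have hsub : xf ξ ⊆ ⋃ j, (t j ∩ xf ξ) := by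
        intro z hz
        obtain ⟨_, ⟨⟨j, rfl⟩, hzj⟩⟩ := hc (Set.mem_biUnion hξ hz)
        exact Set.mem_iUnion.2 ⟨j, ⟨hzj, hz⟩⟩
      obtain ⟨j, y, hy1, hy2⟩ := IH ξ hξ m (fun j => t j ∩ xf ξ) hsub
      exact ⟨(j, y), hy1, hy2⟩
    choose sel hsel1 hsel2 using H
    have hA : Set.Iio (ω ^ γ) ⊆ ⋃ j, {ξ | ∃ h : ξ < ω ^ γ, (sel ξ h).1 = j} :=
      fun ξ hξ => Set.mem_iUnion.2 ⟨(sel ξ hξ).1, ⟨hξ, rfl⟩⟩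
    obtain ⟨j, e, he1, he2⟩ := exists_fiber_embed _ hA
    -- the new family
    set z : Ordinal → Set Ordinal := fun ξ =>
      if h : ξ < ω ^ γ ∧ e ξ < ω ^ γ then (sel (e ξ) h.2).2 else ∅ with hzdef
    have hz : ∀ ξ (hξ : ξ < ω ^ γ), z ξ = (sel (e ξ) (he2 ξ hξ).2).2 := by
      intro ξ hξ
      rw [hzdef]
      simp only [dif_pos (And.intro hξ (he2 ξ hξ).2)]
    have hzsub : ∀ ξ (h : ξ < ω ^ γ), z ξ ⊆ xf (e ξ) := by
      intro ξ hξ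
      rw [hz ξ hξ]
      exact (hsel1 _ _).trans Set.inter_subset_right
    have hztj : ∀ ξ (h : ξ < ω ^ γ), z ξ ⊆ t j := by
      intro ξ hξ
      obtain ⟨h', hj⟩ := (he2 ξ hξ).1
      rw [hz ξ hξ]
      refine (hsel1 _ _).trans ?_
      have hjj : (sel (e ξ) (he2 ξ hξ).2).1 = j := hj
      rw [hjj]
      exact Set.inter_subset_left
    have hzgood : ∀ ξ, ξ < ω ^ γ → Good f (ω ^ γ) σ (z ξ) := by
      intro ξ hξ
      rw [hz ξ hξ]
      exact hsel2 _ _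
    refine ⟨j, ⋃ ξ ∈ Set.Iio (ω ^ γ), z ξ, ?_, ?_⟩
    · exact Set.iUnion₂_subset fun ξ hξ => hztj ξ hξ
    · refine Good.cons σ i z hzgood ?_ ?_
      · intro ξ hξ η hη hlt
        have h1 : sSup (z ξ) ≤ sSup (xf (e ξ)) :=
          csSup_le_csSup (good_bddAbove (hgood (e ξ) (he2 ξ hξ).2))
            (good_nonempty (hzgood ξ hξ) hρ0) (hzsub ξ hξ)
        have h2 : sInf (xf (e η)) ≤ sInf (z η) :=
          csInf_le_csInf (OrderBot.bddBelow _)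
            (good_nonempty (hzgood η hη) hρ0) (hzsub η hη)
        exact h1.trans_lt ((hsep (e ξ) (he2 ξ hξ).2 (e η) (he2 η hη).2
          (he1 ξ η hξ hη hlt)).trans_le h2)
      · intro ξ hξ η hη hlt a ha b hb
        exact hcol (e ξ) (he2 ξ hξ).2 (e η) (he2 η hη).2 (he1 ξ η hξ hη hlt)
          a (hzsub ξ hξ ha) b (hzsub η hη hb)

end AuxGoodCover

/-- If `ρ` is indecomposable, `x ⊆ λ` is `(ρ,σ)`-good and `x = ⋃_{j<m} t_j`,
then some `t_j` contains a `(ρ,σ)`-good subset. -/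
theorem good_of_finite_union (lam : Ordinal.{0}) (k : ℕ) (f : Ordinal → Ordinal → ℕ)
    (hf : ∀ a b, f a b < k) (ρ : Ordinal.{0}) (hρ : ∃ γ, ρ = Ordinal.omega0 ^ γ)
    (σ : List ℕ) (x : Set Ordinal) (hx : x ⊆ Set.Iio lam) (hgood : Good f ρ σ x)
    (m : ℕ) (t : Fin m → Set Ordinal) (hcover : x = ⋃ j, t j) :
    ∃ j : Fin m, ∃ y ⊆ t j, Good f ρ σ y := by
  obtain ⟨n, rfl⟩ := hρ
  rw [← opow_natCast ω n] at hgood ⊢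
  exact good_cover f n σ x hgood m t (hcover ▸ subset_rfl)
end
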